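/- Let f(x) = a₂x² + a₁x + a₀ with real coefficients, a₂ > 0 and discriminant D = a₁² − 4a₀a₂ < 0, and λ > 0. Then the convergent integral I(a₀,a₁,a₂) = ∫_{-∞}^{∞} f(x)^{−λ−1} dx satisfies the box equation ∂²I/∂a₀∂a₂ = ∂²I/∂a₁² and the Euler equations a₀ ∂I/∂a₀ + a₁ ∂I/∂a₁ + a₂ ∂I/∂a₂ = −(λ+1) I and a₁ ∂I/∂a₁ + 2a₂ ∂I/∂a₂ = −I. -/

import Mathlib

open MeasureTheory

noncomputable def QPconst (lam : ℝ) : ℝ :=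
  (∫ t : ℝ, (t ^ 2 + 1) ^ (-(lam + 1))) * (4 : ℝ) ^ (lam + 1/2)

theorem qp_closed_form (lam : ℝ) {b₀ b₁ b₂ : ℝ} (h₂ : 0 < b₂)
    (hQ : 0 < 4 * b₀ * b₂ - b₁ ^ 2) :
    ∫ x : ℝ, (b₂ * x ^ 2 + b₁ * x + b₀) ^ (-(lam + 1))
      = QPconst lam * b₂ ^ lam * (4 * b₀ * b₂ - b₁ ^ 2) ^ (-(lam + 1/2)) := by
  set Q := 4 * b₀ * b₂ - b₁ ^ 2 with hQdef
  set m : ℝ := Q / (4 * b₂) with hm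
  have hmpos : 0 < m := div_pos hQ (by linarith)
  set c : ℝ := b₁ / (2 * b₂) with hc
  set a : ℝ := Real.sqrt (b₂ / m) with ha
  have hapos : 0 < a := Real.sqrt_pos.2 (div_pos h₂ hmpos)
  have key : ∀ x : ℝ, b₂ * x ^ 2 + b₁ * x + b₀ = b₂ * (x + c) ^ 2 + m := by
    intro x
    rw [hc, hm, hQdef]
    field_simp
    ring
  have key2 : ∀ x : ℝ, b₂ * x ^ 2 + m = m * ((a * x) ^ 2 + 1) := by
    intro x
    have h : a ^ 2 = b₂ / m := Real.sq_sqrt (div_pos h₂ hmpos).le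
    rw [mul_pow, h]
    field_simp
  have hscale : a⁻¹ = m ^ (1/2 : ℝ) * b₂ ^ (-(1/2) : ℝ) := by
    rw [ha, ← Real.sqrt_inv, Real.sqrt_eq_rpow,
      inv_div, div_eq_mul_inv, Real.mul_rpow hmpos.le (by positivity),
      ← Real.rpow_neg_one b₂, ← Real.rpow_mul h₂.le]
    norm_num
  calc ∫ x : ℝ, (b₂ * x ^ 2 + b₁ * x + b₀) ^ (-(lam + 1))
      = ∫ x : ℝ, (fun y : ℝ => (b₂ * y ^ 2 + m) ^ (-(lam + 1))) (x + c) := by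
        congr 1; ext x; rw [key x]
    _ = ∫ x : ℝ, (b₂ * x ^ 2 + m) ^ (-(lam + 1)) :=
        integral_add_right_eq_self (μ := volume)
          (fun y : ℝ => (b₂ * y ^ 2 + m) ^ (-(lam + 1))) c
    _ = ∫ x : ℝ, m ^ (-(lam + 1)) * ((a * x) ^ 2 + 1) ^ (-(lam + 1)) := by
        congr 1; ext x
        rw [key2 x, Real.mul_rpow hmpos.le (by positivity)]
    _ = m ^ (-(lam + 1)) * ∫ x : ℝ, (fun t : ℝ => (t ^ 2 + 1) ^ (-(lam + 1))) (a * x) := by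
        rw [integral_const_mul]
    _ = m ^ (-(lam + 1)) * (|a⁻¹| • ∫ t : ℝ, (t ^ 2 + 1) ^ (-(lam + 1))) := by
        congr 1
        exact Measure.integral_comp_mul_left (fun t : ℝ => (t ^ 2 + 1) ^ (-(lam + 1))) a
    _ = QPconst lam * b₂ ^ lam * Q ^ (-(lam + 1/2)) := by
        rw [abs_of_pos (inv_pos.2 hapos), smul_eq_mul, hscale, QPconst]
        have h4 : (0:ℝ) < 4 * b₂ := by linarith
        have e1 : m ^ (-(lam + 1)) * (m ^ (1/2 : ℝ) * b₂ ^ (-(1/2) : ℝ))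
            = m ^ (-(lam + 1/2)) * b₂ ^ (-(1/2) : ℝ) := by
          rw [← mul_assoc, ← Real.rpow_add hmpos,
            show -(lam + 1) + 1/2 = -(lam + 1/2) by ring]
        have e2 : m ^ (-(lam + 1/2)) = Q ^ (-(lam + 1/2)) * (4:ℝ) ^ (lam + 1/2) * b₂ ^ (lam + 1/2) := by
          rw [hm, div_eq_mul_inv, Real.mul_rpow hQ.le (by positivity),
            ← Real.rpow_neg_one (4 * b₂), ← Real.rpow_mul h4.le,
            show (-1 : ℝ) * -(lam + 1/2) = lam + 1/2 by ring,
            Real.mul_rpow (by norm_num) h₂.le]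
          ring
        have e3 : b₂ ^ (lam + 1/2) * b₂ ^ (-(1/2) : ℝ) = b₂ ^ lam := by
          rw [← Real.rpow_add h₂]; norm_num
        have e4 : m ^ (-(lam + 1)) * (m ^ (1/2 : ℝ) * b₂ ^ (-(1/2) : ℝ))
            = (4:ℝ) ^ (lam + 1/2) * b₂ ^ lam * Q ^ (-(lam + 1/2)) := by
          rw [e1, e2]
          calc Q ^ (-(lam + 1/2)) * (4:ℝ) ^ (lam + 1/2) * b₂ ^ (lam + 1/2) * b₂ ^ (-(1/2):ℝ)
              = Q ^ (-(lam + 1/2)) * (4:ℝ) ^ (lam + 1/2)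
                  * (b₂ ^ (lam + 1/2) * b₂ ^ (-(1/2):ℝ)) := by ring
            _ = _ := by rw [e3]; ring
        calc m ^ (-(lam + 1)) * (m ^ (1/2 : ℝ) * b₂ ^ (-(1/2) : ℝ)
              * (∫ t : ℝ, (t ^ 2 + 1) ^ (-(lam + 1))))
            = (m ^ (-(lam + 1)) * (m ^ (1/2 : ℝ) * b₂ ^ (-(1/2) : ℝ)))
                * (∫ t : ℝ, (t ^ 2 + 1) ^ (-(lam + 1))) := by ring
          _ = _ := by rw [e4]; ring

lemma qp_deriv₀ (lam a₁ : ℝ) {a₂ a₀ : ℝ} (h₂ : 0 < a₂) (hQ : 0 < 4 * a₂ * a₀ - a₁ ^ 2) :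
    deriv (fun b₀ => ∫ x : ℝ, (a₂ * x ^ 2 + a₁ * x + b₀) ^ (-(lam + 1))) a₀
      = QPconst lam * a₂ ^ lam *
        (4 * a₂ * -(lam + 1/2) * (4 * a₂ * a₀ - a₁ ^ 2) ^ (-(lam + 1/2) - 1)) := by
  have hc : ContinuousAt (fun b : ℝ => 4 * a₂ * b - a₁ ^ 2) a₀ := by fun_prop
  have hev : (fun b₀ => ∫ x : ℝ, (a₂ * x ^ 2 + a₁ * x + b₀) ^ (-(lam + 1)))
      =ᶠ[nhds a₀] fun b => QPconst lam * a₂ ^ lam * (4 * a₂ * b - a₁ ^ 2) ^ (-(lam + 1/2)) := by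
    filter_upwards [hc.tendsto.eventually (eventually_gt_nhds hQ)] with b hb
    rw [show (4 : ℝ) * a₂ * b - a₁ ^ 2 = 4 * b * a₂ - a₁ ^ 2 from by ring] at hb ⊢
    exact qp_closed_form lam h₂ hb
  rw [hev.deriv_eq]
  have h1 : HasDerivAt (fun b : ℝ => 4 * a₂ * b - a₁ ^ 2) (4 * a₂) a₀ := by
    simpa using ((hasDerivAt_id a₀).const_mul (4 * a₂ : ℝ)).sub_const (a₁ ^ 2)
  exact ((h1.rpow_const (Or.inl hQ.ne')).const_mul (QPconst lam * a₂ ^ lam)).deriv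

lemma qp_deriv₁ (lam a₀ : ℝ) {a₂ a₁ : ℝ} (h₂ : 0 < a₂) (hQ : 0 < 4 * a₀ * a₂ - a₁ ^ 2) :
    deriv (fun b₁ => ∫ x : ℝ, (a₂ * x ^ 2 + b₁ * x + a₀) ^ (-(lam + 1))) a₁
      = QPconst lam * a₂ ^ lam *
        (-(2 * a₁) * -(lam + 1/2) * (4 * a₀ * a₂ - a₁ ^ 2) ^ (-(lam + 1/2) - 1)) := by
  have hc : ContinuousAt (fun b : ℝ => 4 * a₀ * a₂ - b ^ 2) a₁ := by fun_prop
  have hev : (fun b₁ => ∫ x : ℝ, (a₂ * x ^ 2 + b₁ * x + a₀) ^ (-(lam + 1)))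
      =ᶠ[nhds a₁] fun b => QPconst lam * a₂ ^ lam * (4 * a₀ * a₂ - b ^ 2) ^ (-(lam + 1/2)) := by
    filter_upwards [hc.tendsto.eventually (eventually_gt_nhds hQ)] with b hb
    exact qp_closed_form lam h₂ hb
  rw [hev.deriv_eq]
  have h1 : HasDerivAt (fun b : ℝ => 4 * a₀ * a₂ - b ^ 2) (-(2 * a₁)) a₁ := by
    simpa using (hasDerivAt_pow 2 a₁).const_sub (4 * a₀ * a₂)
  exact ((h1.rpow_const (Or.inl hQ.ne')).const_mul (QPconst lam * a₂ ^ lam)).deriv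

lemma qp_deriv₂ (lam a₀ a₁ : ℝ) {a₂ : ℝ} (h₂ : 0 < a₂) (hQ : 0 < 4 * a₀ * a₂ - a₁ ^ 2) :
    deriv (fun b₂ => ∫ x : ℝ, (b₂ * x ^ 2 + a₁ * x + a₀) ^ (-(lam + 1))) a₂
      = QPconst lam * (lam * a₂ ^ (lam - 1) * (4 * a₀ * a₂ - a₁ ^ 2) ^ (-(lam + 1/2))
          + a₂ ^ lam * (4 * a₀ * -(lam + 1/2) * (4 * a₀ * a₂ - a₁ ^ 2) ^ (-(lam + 1/2) - 1))) := by
  have hc : ContinuousAt (fun b : ℝ => 4 * a₀ * b - a₁ ^ 2) a₂ := by fun_prop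
  have hev : (fun b₂ => ∫ x : ℝ, (b₂ * x ^ 2 + a₁ * x + a₀) ^ (-(lam + 1)))
      =ᶠ[nhds a₂] fun b => QPconst lam * (b ^ lam * (4 * a₀ * b - a₁ ^ 2) ^ (-(lam + 1/2))) := by
    filter_upwards [hc.tendsto.eventually (eventually_gt_nhds hQ), eventually_gt_nhds h₂]
      with b hb hb2
    rw [qp_closed_form lam hb2 hb, mul_assoc]
  rw [hev.deriv_eq]
  have h1 : HasDerivAt (fun b : ℝ => b ^ lam) (lam * a₂ ^ (lam - 1)) a₂ :=
    Real.hasDerivAt_rpow_const (Or.inl h₂.ne')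
  have h2 : HasDerivAt (fun b : ℝ => 4 * a₀ * b - a₁ ^ 2) (4 * a₀) a₂ := by
    simpa using ((hasDerivAt_id a₂).const_mul (4 * a₀ : ℝ)).sub_const (a₁ ^ 2)
  exact ((h1.mul (h2.rpow_const (Or.inl hQ.ne'))).const_mul (QPconst lam)).deriv

/-- for `f(x) = a₂x² + a₁x + a₀` with `a₂ > 0`, negative discriminant and
`λ > 0`, the convergent integral `I(a₀,a₁,a₂) = ∫_ℝ f(x)^{-λ-1} dx` satisfies the box
equation `∂²I/∂a₀∂a₂ = ∂²I/∂a₁²` and the Euler equations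
`a₀∂₀I + a₁∂₁I + a₂∂₂I = -(λ+1)I` and `a₁∂₁I + 2a₂∂₂I = -I`. -/
theorem quadratic_period_A_hypergeometric (a₀ a₁ a₂ lam : ℝ)
    (h₂ : 0 < a₂) (hD : a₁ ^ 2 - 4 * a₀ * a₂ < 0) (hlam : 0 < lam) :
    (deriv (fun s => deriv (fun t =>
        ∫ x : ℝ, ((a₂ + t) * x ^ 2 + a₁ * x + (a₀ + s)) ^ (-(lam + 1))) 0) 0
      = deriv (fun s => deriv (fun t =>
        ∫ x : ℝ, (a₂ * x ^ 2 + (a₁ + s + t) * x + a₀) ^ (-(lam + 1))) 0) 0) ∧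
    (a₀ * deriv (fun b₀ => ∫ x : ℝ, (a₂ * x ^ 2 + a₁ * x + b₀) ^ (-(lam + 1))) a₀
      + a₁ * deriv (fun b₁ => ∫ x : ℝ, (a₂ * x ^ 2 + b₁ * x + a₀) ^ (-(lam + 1))) a₁
      + a₂ * deriv (fun b₂ => ∫ x : ℝ, (b₂ * x ^ 2 + a₁ * x + a₀) ^ (-(lam + 1))) a₂
      = -(lam + 1) * ∫ x : ℝ, (a₂ * x ^ 2 + a₁ * x + a₀) ^ (-(lam + 1))) ∧
    (a₁ * deriv (fun b₁ => ∫ x : ℝ, (a₂ * x ^ 2 + b₁ * x + a₀) ^ (-(lam + 1))) a₁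
      + 2 * a₂ * deriv (fun b₂ => ∫ x : ℝ, (b₂ * x ^ 2 + a₁ * x + a₀) ^ (-(lam + 1))) a₂
      = -∫ x : ℝ, (a₂ * x ^ 2 + a₁ * x + a₀) ^ (-(lam + 1))) := by
  have hQ : 0 < 4 * a₀ * a₂ - a₁ ^ 2 := by linarith
  have hQ' : 0 < 4 * a₂ * a₀ - a₁ ^ 2 := by nlinarith
  have hQne : (4 * a₀ * a₂ - a₁ ^ 2 : ℝ) ≠ 0 := hQ.ne'
  have r1 : (4 * a₀ * a₂ - a₁ ^ 2 : ℝ) ^ (-(lam + 1/2))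
      = (4 * a₀ * a₂ - a₁ ^ 2) ^ (-(lam + 1/2) - 1) * (4 * a₀ * a₂ - a₁ ^ 2) := by
    rw [← Real.rpow_add_one hQne]; congr 1; ring
  have r3 : (4 * a₀ * a₂ - a₁ ^ 2 : ℝ) ^ (-(lam + 1/2) - 1)
      = (4 * a₀ * a₂ - a₁ ^ 2) ^ (-(lam + 1/2) - 1 - 1) * (4 * a₀ * a₂ - a₁ ^ 2) := by
    rw [← Real.rpow_add_one hQne]; congr 1; ring
  have r2 : a₂ ^ lam = a₂ ^ (lam - 1) * a₂ := by
    rw [← Real.rpow_add_one h₂.ne']; congr 1; ring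
  refine ⟨?_, ?_, ?_⟩
  · -- box equation
    have hs₂ : ∀ᶠ s in nhds (0 : ℝ), 0 < 4 * (a₀ + s) * a₂ - a₁ ^ 2 := by
      have hc : ContinuousAt (fun s : ℝ => 4 * (a₀ + s) * a₂ - a₁ ^ 2) 0 := by fun_prop
      exact hc.tendsto.eventually
        (eventually_gt_nhds (show (0:ℝ) < 4 * (a₀ + 0) * a₂ - a₁ ^ 2 by nlinarith))
    have hs₁ : ∀ᶠ s in nhds (0 : ℝ), 0 < 4 * a₀ * a₂ - (a₁ + s) ^ 2 := by
      have hc : ContinuousAt (fun s : ℝ => 4 * a₀ * a₂ - (a₁ + s) ^ 2) 0 := by fun_prop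
      exact hc.tendsto.eventually
        (eventually_gt_nhds (show (0:ℝ) < 4 * a₀ * a₂ - (a₁ + 0) ^ 2 by nlinarith))
    have hevL : (fun s => deriv (fun t =>
          ∫ x : ℝ, ((a₂ + t) * x ^ 2 + a₁ * x + (a₀ + s)) ^ (-(lam + 1))) 0)
        =ᶠ[nhds (0 : ℝ)] fun s => QPconst lam *
          (lam * a₂ ^ (lam - 1) * (4 * a₂ * s + (4 * a₀ * a₂ - a₁ ^ 2)) ^ (-(lam + 1/2))
            + a₂ ^ lam * (4 * (a₀ + s) * -(lam + 1/2)
                * (4 * a₂ * s + (4 * a₀ * a₂ - a₁ ^ 2)) ^ (-(lam + 1/2) - 1))) := by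
      filter_upwards [hs₂] with s hs
      calc deriv (fun t => ∫ x : ℝ, ((a₂ + t) * x ^ 2 + a₁ * x + (a₀ + s)) ^ (-(lam + 1))) 0
          = deriv (fun b => ∫ x : ℝ, (b * x ^ 2 + a₁ * x + (a₀ + s)) ^ (-(lam + 1))) (a₂ + 0) :=
            deriv_comp_const_add
              (fun b => ∫ x : ℝ, (b * x ^ 2 + a₁ * x + (a₀ + s)) ^ (-(lam + 1))) a₂ 0
        _ = _ := by
            rw [add_zero, qp_deriv₂ lam (a₀ + s) a₁ h₂ hs,
              show 4 * (a₀ + s) * a₂ - a₁ ^ 2 = 4 * a₂ * s + (4 * a₀ * a₂ - a₁ ^ 2) from by ring]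
    have hevR : (fun s => deriv (fun t =>
          ∫ x : ℝ, (a₂ * x ^ 2 + (a₁ + s + t) * x + a₀) ^ (-(lam + 1))) 0)
        =ᶠ[nhds (0 : ℝ)] fun s => QPconst lam * a₂ ^ lam *
          (-(2 * (a₁ + s)) * -(lam + 1/2)
            * (4 * a₀ * a₂ - (a₁ + s) ^ 2) ^ (-(lam + 1/2) - 1)) := by
      filter_upwards [hs₁] with s hs
      calc deriv (fun t => ∫ x : ℝ, (a₂ * x ^ 2 + (a₁ + s + t) * x + a₀) ^ (-(lam + 1))) 0
          = deriv (fun b => ∫ x : ℝ, (a₂ * x ^ 2 + b * x + a₀) ^ (-(lam + 1))) (a₁ + s + 0) :=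
            deriv_comp_const_add
              (fun b => ∫ x : ℝ, (a₂ * x ^ 2 + b * x + a₀) ^ (-(lam + 1))) (a₁ + s) 0
        _ = _ := by rw [add_zero, qp_deriv₁ lam a₀ h₂ hs]
    have hgL : HasDerivAt (fun s : ℝ => 4 * a₂ * s + (4 * a₀ * a₂ - a₁ ^ 2)) (4 * a₂) 0 := by
      simpa using ((hasDerivAt_id (0:ℝ)).const_mul (4 * a₂ : ℝ)).add_const (4 * a₀ * a₂ - a₁ ^ 2)
    have hneL : (4 * a₂ * (0:ℝ) + (4 * a₀ * a₂ - a₁ ^ 2)) ≠ 0 := by nlinarith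
    have hcoefL : HasDerivAt (fun s : ℝ => 4 * (a₀ + s)) (4 : ℝ) 0 := by
      simpa using ((hasDerivAt_id (0:ℝ)).const_add a₀).const_mul (4 : ℝ)
    have hchainL : HasDerivAt (fun s : ℝ => QPconst lam *
          (lam * a₂ ^ (lam - 1) * (4 * a₂ * s + (4 * a₀ * a₂ - a₁ ^ 2)) ^ (-(lam + 1/2))
            + a₂ ^ lam * (4 * (a₀ + s) * -(lam + 1/2)
                * (4 * a₂ * s + (4 * a₀ * a₂ - a₁ ^ 2)) ^ (-(lam + 1/2) - 1))))
        (QPconst lam *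
          (lam * a₂ ^ (lam - 1) * (4 * a₂ * -(lam + 1/2)
              * (4 * a₂ * (0:ℝ) + (4 * a₀ * a₂ - a₁ ^ 2)) ^ (-(lam + 1/2) - 1))
            + a₂ ^ lam * ((4 * -(lam + 1/2))
                * (4 * a₂ * (0:ℝ) + (4 * a₀ * a₂ - a₁ ^ 2)) ^ (-(lam + 1/2) - 1)
              + (4 * (a₀ + 0) * -(lam + 1/2)) * (4 * a₂ * (-(lam + 1/2) - 1)
                * (4 * a₂ * (0:ℝ) + (4 * a₀ * a₂ - a₁ ^ 2)) ^ (-(lam + 1/2) - 1 - 1))))) 0 := by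
      exact (((hgL.rpow_const (Or.inl hneL)).const_mul (lam * a₂ ^ (lam - 1))).add
        (((hcoefL.mul_const (-(lam + 1/2))).mul
          (hgL.rpow_const (Or.inl hneL))).const_mul (a₂ ^ lam))).const_mul (QPconst lam)
    have hbase : HasDerivAt (fun s : ℝ => 4 * a₀ * a₂ - (a₁ + s) ^ 2) (-(2 * a₁)) 0 := by
      simpa using (((hasDerivAt_id (0:ℝ)).const_add a₁).pow 2).const_sub (4 * a₀ * a₂)
    have hneR : (4 * a₀ * a₂ - ((a₁ : ℝ) + 0) ^ 2) ≠ 0 := by nlinarith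
    have hcoefR : HasDerivAt (fun s : ℝ => -(2 * (a₁ + s))) (-2 : ℝ) 0 := by
      exact (((hasDerivAt_id (0:ℝ)).const_add a₁).const_mul (2:ℝ)).neg.congr_deriv (by norm_num)
    have hchainR : HasDerivAt (fun s : ℝ => QPconst lam * a₂ ^ lam *
          (-(2 * (a₁ + s)) * -(lam + 1/2)
            * (4 * a₀ * a₂ - (a₁ + s) ^ 2) ^ (-(lam + 1/2) - 1)))
        (QPconst lam * a₂ ^ lam *
          ((-2) * -(lam + 1/2) * (4 * a₀ * a₂ - ((a₁:ℝ) + 0) ^ 2) ^ (-(lam + 1/2) - 1)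
            + (-(2 * (a₁ + 0)) * -(lam + 1/2)) * (-(2 * a₁) * (-(lam + 1/2) - 1)
                * (4 * a₀ * a₂ - ((a₁:ℝ) + 0) ^ 2) ^ (-(lam + 1/2) - 1 - 1)))) 0 := by
      exact ((hcoefR.mul_const (-(lam + 1/2))).mul
        (hbase.rpow_const (Or.inl hneR))).const_mul (QPconst lam * a₂ ^ lam)
    rw [hevL.deriv_eq, hevR.deriv_eq, hchainL.deriv, hchainR.deriv,
      show (4 * a₂ * (0:ℝ) + (4 * a₀ * a₂ - a₁ ^ 2)) = 4 * a₀ * a₂ - a₁ ^ 2 from by ring,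
      show ((a₁ : ℝ) + 0) = a₁ from by ring,
      show ((a₀ : ℝ) + 0) = a₀ from by ring, r3, r2]
    ring
  · -- Euler 1
    rw [qp_deriv₀ lam a₁ h₂ hQ', qp_deriv₁ lam a₀ h₂ hQ, qp_deriv₂ lam a₀ a₁ h₂ hQ,
      qp_closed_form lam h₂ hQ,
      show (4 * a₂ * a₀ - a₁ ^ 2 : ℝ) = 4 * a₀ * a₂ - a₁ ^ 2 from by ring, r1, r2]
    ring
  · -- Euler 2
    rw [qp_deriv₁ lam a₀ h₂ hQ, qp_deriv₂ lam a₀ a₁ h₂ hQ, qp_closed_form lam h₂ hQ, r1, r2]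
    ring
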